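/- Let H ∈ L¹(ℝ) be nonnegative, even, and strictly decreasing on (0,∞), let λ ∈ ℝ, and let f ∈ L¹ ∩ L^∞(ℝ) satisfy f(2λ - y) = -f(y) for a.e. y (f is odd about λ) and f(y) ≥ 0 for a.e. y ≥ λ. Then (H * f)(x) = ∫_{λ}^{∞} (H(x-y) - H(x+y-2λ)) f(y) dy ≥ 0 for all x ≥ λ. -/

import Mathlib

open MeasureTheory Set

theorem stmt8 (H f : ℝ → ℝ) (lam : ℝ)
    (hH : MeasureTheory.Integrable H) (hHpos : ∀ x, 0 ≤ H x)
    (hHeven : ∀ x, H (-x) = H x) (hHanti : StrictAntiOn H (Set.Ioi 0))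
    (hf1 : MeasureTheory.Integrable f) (hfB : ∃ B, ∀ y, |f y| ≤ B)
    (hodd : ∀ᵐ y : ℝ ∂MeasureTheory.volume, f (2 * lam - y) = -f y)
    (hfpos : ∀ᵐ y : ℝ ∂MeasureTheory.volume, lam ≤ y → 0 ≤ f y) :
    ∀ x : ℝ, lam ≤ x →
      ((∫ y : ℝ, H (x - y) * f y) =
        ∫ y in Set.Ioi lam, (H (x - y) - H (x + y - 2 * lam)) * f y) ∧
      0 ≤ ∫ y : ℝ, H (x - y) * f y := by
  obtain ⟨B, hB⟩ := hfB
  have hBn : ∃ C, ∀ y, ‖f y‖ ≤ C := ⟨B, fun y => by simpa using hB y⟩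
  have hfm := hf1.aestronglyMeasurable
  intro x hx
  -- integrability of the convolution integrand
  have h1 : Integrable (fun y => H (x - y) * f y) := by
    have := (hH.comp_sub_left x).bdd_mul hfm (Filter.Eventually.of_forall (hBn.choose_spec))
    simpa [mul_comm] using this
  have h2 : Integrable (fun y => H (x + y - 2 * lam) * f y) := by
    have h0 : Integrable (fun y => H (y + (x - 2 * lam))) := hH.comp_add_right _
    have := h0.bdd_mul hfm (Filter.Eventually.of_forall (hBn.choose_spec))
    have heq : (fun y => f y * H (y + (x - 2 * lam))) =
        fun y => H (x + y - 2 * lam) * f y := by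
      funext y; rw [mul_comm]; ring_nf
    rwa [heq] at this
  -- reflection: integral over Iic lam equals minus integral over Ioi lam
  have hg : (fun y : ℝ => (Iio lam).indicator (fun z => H (x - z) * f z) (2 * lam - y))
      =ᵐ[volume] fun y : ℝ => (Ioi lam).indicator (fun z => - (H (x + z - 2 * lam) * f z)) y := by
    filter_upwards [hodd] with y hy
    by_cases h : lam < y
    · have h1' : (2 : ℝ) * lam - y ∈ Iio lam := by simp [mem_Iio]; linarith
      rw [indicator_of_mem h1', indicator_of_mem (mem_Ioi.2 h)]
      have : x - (2 * lam - y) = x + y - 2 * lam := by ring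
      rw [this, hy]; ring
    · have h1' : (2 : ℝ) * lam - y ∉ Iio lam := by simp [mem_Iio]; linarith [not_lt.1 h]
      rw [indicator_of_notMem h1', indicator_of_notMem (by simpa [mem_Ioi] using h)]
  have hrefl : (∫ y in Iic lam, H (x - y) * f y) =
      - ∫ y in Ioi lam, H (x + y - 2 * lam) * f y := by
    rw [integral_Iic_eq_integral_Iio]
    have e1 : (∫ y in Iio lam, H (x - y) * f y) =
        ∫ y : ℝ, (Iio lam).indicator (fun z => H (x - z) * f z) y := by
      rw [integral_indicator measurableSet_Iio]
    have e2 : (∫ y : ℝ, (Iio lam).indicator (fun z => H (x - z) * f z) y) =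
        ∫ y : ℝ, (Iio lam).indicator (fun z => H (x - z) * f z) (2 * lam - y) := by
      have := integral_sub_left_eq_self
        (μ := (volume : Measure ℝ)) ((Iio lam).indicator (fun z => H (x - z) * f z)) (2 * lam)
      exact this.symm
    rw [e1, e2, integral_congr_ae hg, integral_indicator measurableSet_Ioi, integral_neg]
  have hsplit : (∫ y : ℝ, H (x - y) * f y) =
      (∫ y in Iic lam, H (x - y) * f y) + ∫ y in Ioi lam, H (x - y) * f y :=
    (intervalIntegral.integral_Iic_add_Ioi h1.integrableOn h1.integrableOn).symm
  have hkey : (∫ y : ℝ, H (x - y) * f y) =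
      ∫ y in Set.Ioi lam, (H (x - y) - H (x + y - 2 * lam)) * f y := by
    rw [hsplit, hrefl]
    rw [← sub_eq_neg_add]
    rw [← integral_sub h1.integrableOn h2.integrableOn]
    congr 1
    funext y
    ring
  refine ⟨hkey, ?_⟩
  rw [hkey]
  have hne : ∀ᵐ y : ℝ ∂volume, y ≠ x := by
    have : volume ({x} : Set ℝ) = 0 := measure_singleton x
    rw [ae_iff]
    simpa using this
  refine setIntegral_nonneg_ae measurableSet_Ioi ?_
  filter_upwards [hfpos, hne] with y hy hyx hmem
  have hylam : lam < y := hmem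
  have hfy : 0 ≤ f y := hy hylam.le
  have hb : (0 : ℝ) < x + y - 2 * lam := by linarith
  have habs : |x - y| ≤ x + y - 2 * lam := abs_le.2 ⟨by linarith, by linarith⟩
  have hEx : H (x - y) = H |x - y| := by
    rcases abs_cases (x - y) with ⟨h, _⟩ | ⟨h, _⟩
    · rw [h]
    · rw [h, hHeven]
  have hle : H (x + y - 2 * lam) ≤ H (x - y) := by
    rcases eq_or_lt_of_le habs with heq | hlt
    · rw [hEx, heq]
    · have ha : 0 < |x - y| := abs_pos.2 (sub_ne_zero.2 fun h => hyx (h.symm))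
      rw [hEx]
      exact (hHanti (mem_Ioi.2 ha) (mem_Ioi.2 hb) hlt).le
  have : 0 ≤ H (x - y) - H (x + y - 2 * lam) := by linarith
  exact mul_nonneg this hfy
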